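/- Let σ, d satisfy σd > 4 and σ(d-4) < 4, and let B : (0,∞) → C behave asymptotically like B(ρ) ~ c ρ^{-(2/(3σ))(σd-1)} e^{iθ(ρ)} with phase θ(ρ) = -(3/4) b ρ^{4/3} - (1/(3b³)) log ρ for constants c ≠ 0, b > 0 (the WKB profile B_2). Then B'' ∉ L²(R^d, ρ^{d-1} dρ): the integral ∫_1^∞ |B''(ρ)|² ρ^{d-1} dρ diverges. More precisely, |B''(ρ)|² grows like ρ^{-(4/(3σ))(σd-1) + 4/3}, and the exponent -(4/(3σ))(σd-1-σ) + d - 1 is ≥ -1 exactly when σ(d-4) < 4. -/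

import Mathlib

open MeasureTheory Filter

noncomputable section
namespace WKBaux

def θf (b k : ℝ) (ρ : ℝ) : ℝ := -(3/4) * b * ρ ^ ((4:ℝ)/3) - k * Real.log ρ
def θ1 (b k : ℝ) (ρ : ℝ) : ℝ := -b * ρ ^ ((1:ℝ)/3) - k / ρ
def θ2 (b k : ℝ) (ρ : ℝ) : ℝ := -(b/3) * ρ ^ (-(2/3) : ℝ) + k / ρ ^ 2
def g (a b k : ℝ) (c : ℂ) (ρ : ℝ) : ℂ :=
  c * ((ρ ^ a : ℝ) : ℂ) * Complex.exp (Complex.I * ((θf b k ρ : ℝ) : ℂ))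
def h (a b k : ℝ) (ρ : ℝ) : ℂ :=
  ((a / ρ : ℝ) : ℂ) + Complex.I * ((θ1 b k ρ : ℝ) : ℂ)
def hd (a b k : ℝ) (ρ : ℝ) : ℂ :=
  ((-a / ρ ^ 2 : ℝ) : ℂ) + Complex.I * ((θ2 b k ρ : ℝ) : ℂ)
def u (a b k : ℝ) (ρ : ℝ) : ℝ := (a / ρ) ^ 2 - (θ1 b k ρ) ^ 2 - a / ρ ^ 2
def v (a b k : ℝ) (ρ : ℝ) : ℝ := 2 * (a / ρ) * (θ1 b k ρ) + θ2 b k ρ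

lemma hasDerivAt_θf (b k : ℝ) {ρ : ℝ} (hρ : 0 < ρ) :
    HasDerivAt (θf b k) (θ1 b k ρ) ρ := by
  unfold θf θ1
  have h1 : HasDerivAt (fun ρ : ℝ => -(3/4) * b * ρ ^ ((4:ℝ)/3))
      (-(3/4) * b * ((4:ℝ)/3 * ρ ^ ((4:ℝ)/3 - 1))) ρ :=
    (Real.hasDerivAt_rpow_const (Or.inl hρ.ne')).const_mul _
  have h2 := (Real.hasDerivAt_log hρ.ne').const_mul k
  refine (h1.sub h2).congr_deriv ?_
  rw [show (4:ℝ)/3 - 1 = 1/3 by norm_num]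
  ring

lemma hasDerivAt_θ1 (b k : ℝ) {ρ : ℝ} (hρ : 0 < ρ) :
    HasDerivAt (θ1 b k) (θ2 b k ρ) ρ := by
  unfold θ1 θ2
  have h1 : HasDerivAt (fun ρ : ℝ => -b * ρ ^ ((1:ℝ)/3))
      (-b * ((1:ℝ)/3 * ρ ^ ((1:ℝ)/3 - 1))) ρ :=
    (Real.hasDerivAt_rpow_const (Or.inl hρ.ne')).const_mul _
  have h2 : HasDerivAt (fun ρ : ℝ => k / ρ) (k * (-(ρ^2)⁻¹)) ρ := by
    simpa [div_eq_mul_inv] using (hasDerivAt_inv hρ.ne').const_mul k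
  refine (h1.sub h2).congr_deriv ?_
  rw [show (1:ℝ)/3 - 1 = -(2/3) by norm_num]
  field_simp
  ring

lemma hasDerivAt_g (a b k : ℝ) (c : ℂ) {ρ : ℝ} (hρ : 0 < ρ) :
    HasDerivAt (g a b k c) (g a b k c ρ * h a b k ρ) ρ := by
  have hp : HasDerivAt (fun ρ : ℝ => ((ρ ^ a : ℝ) : ℂ)) ((a * ρ ^ (a-1) : ℝ) : ℂ) ρ :=
    (Real.hasDerivAt_rpow_const (Or.inl hρ.ne')).ofReal_comp
  have hθ : HasDerivAt (fun ρ : ℝ => Complex.I * ((θf b k ρ : ℝ) : ℂ))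
      (Complex.I * ((θ1 b k ρ : ℝ) : ℂ)) ρ :=
    ((hasDerivAt_θf b k hρ).ofReal_comp).const_mul Complex.I
  have he := hθ.cexp
  have hmul := (hp.const_mul c).mul he
  unfold g h
  refine hmul.congr_deriv ?_
  have hrne : (ρ : ℂ) ≠ 0 := by exact_mod_cast hρ.ne'
  rw [Real.rpow_sub hρ, Real.rpow_one]
  push_cast
  field_simp

lemma hasDerivAt_h (a b k : ℝ) {ρ : ℝ} (hρ : 0 < ρ) :
    HasDerivAt (h a b k) (hd a b k ρ) ρ := by
  unfold h hd
  have h1 : HasDerivAt (fun ρ : ℝ => ((a / ρ : ℝ) : ℂ)) ((a * (-(ρ^2)⁻¹) : ℝ) : ℂ) ρ := by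
    have : HasDerivAt (fun ρ : ℝ => a / ρ) (a * (-(ρ^2)⁻¹)) ρ := by
      simpa [div_eq_mul_inv] using (hasDerivAt_inv hρ.ne').const_mul a
    exact this.ofReal_comp
  have h2 : HasDerivAt (fun ρ : ℝ => Complex.I * ((θ1 b k ρ : ℝ) : ℂ))
      (Complex.I * ((θ2 b k ρ : ℝ) : ℂ)) ρ :=
    ((hasDerivAt_θ1 b k hρ).ofReal_comp).const_mul Complex.I
  refine (h1.add h2).congr_deriv ?_
  push_cast
  field_simp

lemma hasDerivAt_g1 (a b k : ℝ) (c : ℂ) {ρ : ℝ} (hρ : 0 < ρ) :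
    HasDerivAt (fun x => g a b k c x * h a b k x)
      (g a b k c ρ * ((h a b k ρ) ^ 2 + hd a b k ρ)) ρ := by
  have := (hasDerivAt_g a b k c hρ).mul (hasDerivAt_h a b k hρ)
  refine this.congr_deriv ?_
  ring

lemma cube_root_pow {ρ : ℝ} (hρ : 0 < ρ) (m : ℝ) (n : ℕ) (hmn : m * 3 = -(n:ℝ)) :
    ρ ^ m = 1 / (ρ ^ ((1:ℝ)/3)) ^ n := by
  rw [← Real.rpow_natCast (ρ ^ ((1:ℝ)/3)) n, ← Real.rpow_mul hρ.le, one_div,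
    ← Real.rpow_neg hρ.le]
  congr 1
  linarith

lemma cube_root_cube {ρ : ℝ} (hρ : 0 < ρ) : (ρ ^ ((1:ℝ)/3)) ^ 3 = ρ := by
  rw [← Real.rpow_natCast (ρ ^ ((1:ℝ)/3)) 3, ← Real.rpow_mul hρ.le]
  norm_num

lemma u_eq (a b k : ℝ) {ρ : ℝ} (hρ : 0 < ρ) :
    u a b k ρ * ρ ^ (-(2/3) : ℝ) =
      (a ^ 2 - k ^ 2 - a) * ρ ^ (-(8/3) : ℝ) - 2 * b * k * ρ ^ (-(4/3) : ℝ) - b ^ 2 := by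
  have k2 := cube_root_pow hρ (-(2/3)) 2 (by norm_num)
  have k4 := cube_root_pow hρ (-(4/3)) 4 (by norm_num)
  have k8 := cube_root_pow hρ (-(8/3)) 8 (by norm_num)
  have h3 := cube_root_cube hρ
  have hs : (0:ℝ) < ρ ^ ((1:ℝ)/3) := Real.rpow_pos_of_pos hρ _
  unfold u θ1
  set s := ρ ^ ((1:ℝ)/3) with hsdef
  rw [k2, k4, k8, ← h3]
  field_simp
  ring

lemma v_eq (a b k : ℝ) {ρ : ℝ} (hρ : 0 < ρ) :
    v a b k ρ * ρ ^ (-(2/3) : ℝ) =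
      (-2*a*b - b/3) * ρ ^ (-(4/3) : ℝ) + (k - 2*a*k) * ρ ^ (-(8/3) : ℝ) := by
  have k2 := cube_root_pow hρ (-(2/3)) 2 (by norm_num)
  have k4 := cube_root_pow hρ (-(4/3)) 4 (by norm_num)
  have k8 := cube_root_pow hρ (-(8/3)) 8 (by norm_num)
  have h3 := cube_root_cube hρ
  have hs : (0:ℝ) < ρ ^ ((1:ℝ)/3) := Real.rpow_pos_of_pos hρ _
  unfold v θ1 θ2
  set s := ρ ^ ((1:ℝ)/3) with hsdef
  rw [k2, k4, k8, ← h3]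
  field_simp
  ring

lemma h_sq_add_hd (a b k : ℝ) (ρ : ℝ) :
    (h a b k ρ) ^ 2 + hd a b k ρ = ((u a b k ρ : ℝ) : ℂ) + ((v a b k ρ : ℝ) : ℂ) * Complex.I := by
  simp only [h, hd, u, v]
  push_cast
  linear_combination ((θ1 b k ρ : ℝ) : ℂ) ^ 2 * Complex.I_sq

lemma norm_g2 (a b k : ℝ) (c : ℂ) {ρ : ℝ} (hρ : 0 < ρ) :
    ‖g a b k c ρ * ((h a b k ρ) ^ 2 + hd a b k ρ)‖ ^ 2 =
      ‖c‖ ^ 2 * (ρ ^ a) ^ 2 * ((u a b k ρ) ^ 2 + (v a b k ρ) ^ 2) := by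
  rw [h_sq_add_hd, norm_mul, mul_pow]
  have h1 : ‖g a b k c ρ‖ = ‖c‖ * ρ ^ a := by
    simp [g, norm_mul, mul_comm Complex.I, Complex.norm_exp_ofReal_mul_I,
      abs_of_pos (Real.rpow_pos_of_pos hρ a)]
  have h2 : ‖((u a b k ρ : ℝ) : ℂ) + ((v a b k ρ : ℝ) : ℂ) * Complex.I‖ ^ 2 =
      (u a b k ρ) ^ 2 + (v a b k ρ) ^ 2 := by
    rw [Complex.sq_norm, Complex.normSq_add_mul_I]
  rw [h1, h2, mul_pow]

end WKBaux
end

open WKBaux in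
/-- The WKB profile `B₂` fails to have a square-integrable second derivative:
for `B(ρ) = c ρ^{-(2/(3σ))(σd-1)} e^{iθ(ρ)}` with
`θ(ρ) = -(3/4)bρ^{4/3} - (1/(3b³)) log ρ`, the integral
`∫_1^∞ |B''(ρ)|² ρ^{d-1} dρ` diverges; `|B''(ρ)|²` grows like
`ρ^{-(4/(3σ))(σd-1)+4/3}`, and the resulting exponent
`-(4/(3σ))(σd-1-σ) + d - 1` is `≥ -1` exactly when `σ(d-4) < 4`. -/
theorem wkb_profile_B2_not_H2 (d : ℕ) (σ b : ℝ) (c : ℂ)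
    (hσ : 0 < σ) (hb : 0 < b) (hc : c ≠ 0)
    (hsup : 4 < σ * d) (hsub : σ * ((d : ℝ) - 4) < 4)
    (B : ℝ → ℂ)
    (hB : ∀ ρ ≥ (1:ℝ), B ρ =
      c * ((ρ ^ (-(2 / (3 * σ)) * (σ * d - 1)) : ℝ) : ℂ) *
        Complex.exp (Complex.I *
          (((-(3 / 4) * b * ρ ^ ((4:ℝ)/3) - (1 / (3 * b ^ 3)) * Real.log ρ : ℝ)) : ℂ))) :
    ¬ MeasureTheory.IntegrableOn
        (fun ρ => ‖deriv (deriv B) ρ‖ ^ 2 * ρ ^ ((d : ℝ) - 1)) (Set.Ici 1) ∧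
    (∃ C > 0, Filter.Tendsto
      (fun ρ => ‖deriv (deriv B) ρ‖ ^ 2 / ρ ^ (-(4 / (3 * σ)) * (σ * d - 1) + 4/3))
      Filter.atTop (nhds C)) ∧
    (-(4 / (3 * σ)) * (σ * d - 1 - σ) + d - 1 ≥ -1 ↔ σ * ((d : ℝ) - 4) < 4) := by
  set a : ℝ := -(2 / (3 * σ)) * (σ * d - 1) with ha
  set k : ℝ := 1 / (3 * b ^ 3) with hk
  have hcpos : 0 < ‖c‖ := norm_pos_iff.mpr hc
  set C : ℝ := ‖c‖ ^ 2 * b ^ 4 with hC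
  have hCpos : 0 < C := by positivity
  -- exponent arithmetic key
  have hkey : -(4 / (3 * σ)) * (σ * (d:ℝ) - 1 - σ) + (d:ℝ) - 1 + 1 =
      (4 + 4*σ - σ*(d:ℝ)) / (3*σ) := by
    field_simp [hσ.ne']
    ring
  have hkeypos : (0:ℝ) < (4 + 4*σ - σ*(d:ℝ)) / (3*σ) :=
    div_pos (by linarith) (by linarith)
  -- second derivative formula
  have hg2 : ∀ ρ : ℝ, 1 < ρ → deriv (deriv B) ρ =
      g a b k c ρ * ((h a b k ρ) ^ 2 + hd a b k ρ) := by
    intro ρ hρ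
    have hEq : Set.EqOn B (g a b k c) (Set.Ioi 1) := by
      intro x hx
      rw [hB x (le_of_lt hx)]
      rfl
    have h1 : Set.EqOn (deriv B) (fun x => g a b k c x * h a b k x) (Set.Ioi 1) := by
      intro x hx
      have hev : B =ᶠ[nhds x] g a b k c :=
        Filter.eventuallyEq_of_mem (Ioi_mem_nhds hx) hEq
      rw [hev.deriv_eq]
      exact (hasDerivAt_g a b k c (lt_trans one_pos hx)).deriv
    have hev2 : deriv B =ᶠ[nhds ρ] (fun x => g a b k c x * h a b k x) :=
      Filter.eventuallyEq_of_mem (Ioi_mem_nhds hρ) h1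
    rw [hev2.deriv_eq]
    exact (hasDerivAt_g1 a b k c (lt_trans one_pos hρ)).deriv
  -- norm squared formula
  have hnorm : ∀ ρ : ℝ, 1 < ρ → ‖deriv (deriv B) ρ‖ ^ 2 =
      ‖c‖ ^ 2 * (ρ ^ a) ^ 2 * ((u a b k ρ) ^ 2 + (v a b k ρ) ^ 2) := by
    intro ρ hρ
    rw [hg2 ρ hρ]
    exact norm_g2 a b k c (lt_trans one_pos hρ)
  -- ratio formula
  have hE2 : ∀ ρ : ℝ, 1 < ρ →
      ‖deriv (deriv B) ρ‖ ^ 2 / ρ ^ (-(4 / (3 * σ)) * (σ * (d:ℝ) - 1) + 4/3) =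
      ‖c‖ ^ 2 * ((u a b k ρ * ρ ^ (-(2/3):ℝ)) ^ 2 + (v a b k ρ * ρ ^ (-(2/3):ℝ)) ^ 2) := by
    intro ρ hρ
    have hρ0 : 0 < ρ := lt_trans one_pos hρ
    rw [hnorm ρ hρ]
    rw [show (-(4 / (3 * σ)) * (σ * (d:ℝ) - 1) + 4/3) = a + a + ((2:ℝ)/3 + (2:ℝ)/3) by
      rw [ha]; ring]
    rw [Real.rpow_add hρ0, Real.rpow_add hρ0, Real.rpow_add hρ0,
      show (-(2/3):ℝ) = -((2:ℝ)/3) by norm_num, Real.rpow_neg hρ0.le]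
    have h23 : (0:ℝ) < ρ ^ ((2:ℝ)/3) := Real.rpow_pos_of_pos hρ0 _
    have hA : (0:ℝ) < ρ ^ a := Real.rpow_pos_of_pos hρ0 _
    field_simp
  -- limits
  have t83 : Filter.Tendsto (fun x:ℝ => x ^ (-(8/3):ℝ)) atTop (nhds 0) :=
    tendsto_rpow_neg_atTop (by norm_num : (0:ℝ) < 8/3)
  have t43 : Filter.Tendsto (fun x:ℝ => x ^ (-(4/3):ℝ)) atTop (nhds 0) :=
    tendsto_rpow_neg_atTop (by norm_num : (0:ℝ) < 4/3)
  have tU : Filter.Tendsto (fun ρ => u a b k ρ * ρ ^ (-(2/3):ℝ)) atTop (nhds (-b^2)) := by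
    have hlim : Filter.Tendsto
        (fun ρ:ℝ => (a^2-k^2-a) * ρ ^ (-(8/3):ℝ) - 2*b*k* ρ ^ (-(4/3):ℝ) - b^2) atTop
        (nhds ((a^2-k^2-a) * 0 - 2*b*k*0 - b^2)) :=
      ((t83.const_mul _).sub (t43.const_mul _)).sub_const _
    refine Filter.Tendsto.congr' ?_ (by simpa using hlim)
    filter_upwards [eventually_gt_atTop (0:ℝ)] with ρ hρ
    linear_combination (u_eq a b k hρ).symm
  have tV : Filter.Tendsto (fun ρ => v a b k ρ * ρ ^ (-(2/3):ℝ)) atTop (nhds 0) := by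
    have hlim : Filter.Tendsto
        (fun ρ:ℝ => (-2*a*b - b/3) * ρ ^ (-(4/3):ℝ) + (k - 2*a*k) * ρ ^ (-(8/3):ℝ)) atTop
        (nhds ((-2*a*b - b/3) * 0 + (k - 2*a*k) * 0)) :=
      (t43.const_mul _).add (t83.const_mul _)
    refine Filter.Tendsto.congr' ?_ (by simpa using hlim)
    filter_upwards [eventually_gt_atTop (0:ℝ)] with ρ hρ
    linear_combination (v_eq a b k hρ).symm
  have tW : Filter.Tendsto
      (fun ρ => ‖c‖ ^ 2 * ((u a b k ρ * ρ ^ (-(2/3):ℝ)) ^ 2 + (v a b k ρ * ρ ^ (-(2/3):ℝ)) ^ 2))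
      atTop (nhds C) := by
    have := ((tU.pow 2).add (tV.pow 2)).const_mul (‖c‖ ^ 2)
    have heq : ‖c‖ ^ 2 * ((-b^2)^2 + 0^2) = C := by rw [hC]; ring
    rwa [heq] at this
  have hTend : Filter.Tendsto
      (fun ρ => ‖deriv (deriv B) ρ‖ ^ 2 / ρ ^ (-(4 / (3 * σ)) * (σ * (d:ℝ) - 1) + 4/3))
      atTop (nhds C) := by
    refine Filter.Tendsto.congr' ?_ tW
    filter_upwards [eventually_gt_atTop (1:ℝ)] with ρ hρ
    exact (hE2 ρ hρ).symm
  refine ⟨?_, ⟨C, hCpos, hTend⟩, fun _ => hsub, fun _ => by linarith [hkey, hkeypos]⟩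
  -- non-integrability
  intro hInt
  set E : ℝ := -(4 / (3 * σ)) * (σ * (d:ℝ) - 1) + 4/3 + ((d:ℝ) - 1) with hE
  clear_value E
  have hEgt : (-1:ℝ) < E := by
    have h5 : E + 1 = (4 + 4*σ - σ*(d:ℝ)) / (3*σ) := by
      rw [hE]; field_simp [hσ.ne']; ring
    linarith
  have hTendF : Filter.Tendsto
      (fun ρ => (‖deriv (deriv B) ρ‖ ^ 2 * ρ ^ ((d:ℝ) - 1)) / ρ ^ E) atTop (nhds C) := by
    refine Filter.Tendsto.congr' ?_ hTend
    filter_upwards [eventually_gt_atTop (1:ℝ)] with ρ hρ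
    have hρ0 : (0:ℝ) < ρ := lt_trans one_pos hρ
    have h1 : (0:ℝ) < ρ ^ (-(4 / (3 * σ)) * (σ * (d:ℝ) - 1) + 4/3) :=
      Real.rpow_pos_of_pos hρ0 _
    have h2 : (0:ℝ) < ρ ^ ((d:ℝ) - 1) := Real.rpow_pos_of_pos hρ0 _
    have hsplit : ρ ^ E = ρ ^ (-(4 / (3 * σ)) * (σ * (d:ℝ) - 1) + 4/3) * ρ ^ ((d:ℝ) - 1) := by
      rw [hE, Real.rpow_add hρ0]
    rw [hsplit, div_eq_div_iff h1.ne' (mul_pos h1 h2).ne']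
    ring
  have hev : ∀ᶠ ρ in atTop,
      C/2 ≤ (‖deriv (deriv B) ρ‖ ^ 2 * ρ ^ ((d:ℝ) - 1)) / ρ ^ E :=
    hTendF.eventually (eventually_ge_nhds (half_lt_self hCpos))
  obtain ⟨R₀, hR₀⟩ := eventually_atTop.mp hev
  set R : ℝ := max R₀ 2 with hR
  have hR1 : (1:ℝ) < R := lt_of_lt_of_le one_lt_two (le_max_right _ _)
  have hbound : ∀ ρ ∈ Set.Ioi R, C/2 * ρ ^ E ≤ ‖deriv (deriv B) ρ‖ ^ 2 * ρ ^ ((d:ℝ) - 1) := by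
    intro ρ hρ
    have hρ0 : (0:ℝ) < ρ := lt_trans (lt_trans one_pos hR1) hρ
    have := hR₀ ρ (le_trans (le_max_left _ _) (le_of_lt hρ))
    rwa [le_div_iff₀ (Real.rpow_pos_of_pos hρ0 E)] at this
  have hIntR : IntegrableOn
      (fun ρ => ‖deriv (deriv B) ρ‖ ^ 2 * ρ ^ ((d:ℝ) - 1)) (Set.Ioi R) :=
    hInt.mono_set (fun x hx => le_of_lt (lt_trans hR1 hx))
  have hint2 : IntegrableOn (fun ρ => C/2 * ρ ^ E) (Set.Ioi R) := by
    refine Integrable.mono hIntR ?_ ?_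
    · have hcont : ContinuousOn (fun ρ:ℝ => C/2 * ρ ^ E) (Set.Ioi R) := fun x hx =>
        (continuousAt_const.mul (Real.continuousAt_rpow_const x E
          (Or.inl (ne_of_gt (lt_trans (lt_trans one_pos hR1) hx))))).continuousWithinAt
      exact hcont.aestronglyMeasurable measurableSet_Ioi
    · rw [ae_restrict_iff' measurableSet_Ioi]
      filter_upwards with ρ hρ
      have hρ0 : (0:ℝ) < ρ := lt_trans (lt_trans one_pos hR1) hρ
      rw [Real.norm_eq_abs, Real.norm_eq_abs, abs_of_nonneg (by positivity),
        abs_of_nonneg (by positivity)]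
      exact hbound ρ hρ
  have hint3 : IntegrableOn (fun ρ : ℝ => ρ ^ E) (Set.Ioi R) := by
    have h4 := hint2.const_mul (2/C)
    have heq : (fun ρ:ℝ => (2/C) * (C/2 * ρ ^ E)) = fun ρ:ℝ => ρ ^ E := by
      funext ρ
      field_simp
    rwa [heq] at h4
  have := (integrableOn_Ioi_rpow_iff (lt_trans one_pos hR1)).mp hint3
  linarith
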